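/- Let y ∈ ℝⁿ with y ≠ 0, X an n×d real matrix, D a d×d positive semidefinite real matrix, V an n×n positive semidefinite real matrix, and N = X D Xᵀ + V with y ∈ range(N). Define J(β; D, V) = (y − Xβ)ᵀ V† (y − Xβ) + βᵀ D† β + tr(N)/‖y‖₂² and β̂ = D Xᵀ N† y. Then the minimum of J(β; D, V) over the set Θ(D,V) = {β : y − Xβ ∈ range(V), β ∈ range(D)} is attained at β̂ and equals tr((y yᵀ − N)ᵀ N† (y yᵀ − N))/‖y‖₂² + 2. -/

import Mathlib

open Matrix

/-- The four Penrose conditions: `B` is the Moore–Penrose pseudoinverse of `A`. -/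
def IsMoorePenrose {m n : Type*} [Fintype m] [Fintype n]
    (A : Matrix m n ℝ) (B : Matrix n m ℝ) : Prop :=
  A * B * A = A ∧ B * A * B = B ∧ (A * B)ᵀ = A * B ∧ (B * A)ᵀ = B * A

/-- `J(β; D, V) = (y − Xβ)ᵀ V† (y − Xβ) + βᵀ D† β + tr(N)/‖y‖₂²`. -/
noncomputable def Jcost {n d : ℕ} (y : Fin n → ℝ) (X : Matrix (Fin n) (Fin d) ℝ)
    (D : Matrix (Fin d) (Fin d) ℝ) (V : Matrix (Fin n) (Fin n) ℝ)
    (Dd : Matrix (Fin d) (Fin d) ℝ) (Vd : Matrix (Fin n) (Fin n) ℝ)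
    (β : Fin d → ℝ) : ℝ :=
  (y - X.mulVec β) ⬝ᵥ Vd.mulVec (y - X.mulVec β) + β ⬝ᵥ Dd.mulVec β +
    (X * D * Xᵀ + V).trace / (y ⬝ᵥ y)

section aux
variable {m l : Type*} [Fintype m] [Fintype l]

lemma mp_unique (A : Matrix m l ℝ) (B C : Matrix l m ℝ)
    (hB : IsMoorePenrose A B) (hC : IsMoorePenrose A C) : B = C := by
  obtain ⟨hB1, hB2, hB3, hB4⟩ := hB
  obtain ⟨hC1, hC2, hC3, hC4⟩ := hC
  have h1 : A * B = A * C := by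
    calc A * B = (A * B)ᵀ := hB3.symm
      _ = Bᵀ * Aᵀ := transpose_mul _ _
      _ = Bᵀ * (A * C * A)ᵀ := by rw [hC1]
      _ = Bᵀ * (Aᵀ * (A * C)ᵀ) := by rw [transpose_mul (A * C) A]
      _ = Bᵀ * (Aᵀ * (A * C)) := by rw [hC3]
      _ = (Bᵀ * Aᵀ) * (A * C) := by rw [Matrix.mul_assoc Bᵀ Aᵀ (A * C)]
      _ = (A * B)ᵀ * (A * C) := by rw [transpose_mul]
      _ = (A * B) * (A * C) := by rw [hB3]
      _ = (A * B * A) * C := by rw [← Matrix.mul_assoc (A * B) A C]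
      _ = A * C := by rw [hB1]
  have h2 : B * A = C * A := by
    calc B * A = (B * A)ᵀ := hB4.symm
      _ = Aᵀ * Bᵀ := transpose_mul _ _
      _ = (A * (C * A))ᵀ * Bᵀ := by rw [← Matrix.mul_assoc A C A, hC1]
      _ = ((C * A)ᵀ * Aᵀ) * Bᵀ := by rw [transpose_mul A (C * A)]
      _ = ((C * A) * Aᵀ) * Bᵀ := by rw [hC4]
      _ = (C * A) * (Aᵀ * Bᵀ) := by rw [Matrix.mul_assoc (C * A) Aᵀ Bᵀ]
      _ = (C * A) * (B * A)ᵀ := by rw [transpose_mul]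
      _ = (C * A) * (B * A) := by rw [hB4]
      _ = C * (A * B * A) := by rw [Matrix.mul_assoc C A (B * A), ← Matrix.mul_assoc A B A]
      _ = C * A := by rw [hB1]
  calc B = B * A * B := hB2.symm
    _ = C * A * B := by rw [h2]
    _ = C * (A * B) := by rw [Matrix.mul_assoc C A B]
    _ = C * (A * C) := by rw [h1]
    _ = C * A * C := by rw [← Matrix.mul_assoc C A C]
    _ = C := hC2

lemma mp_symm (A B : Matrix m m ℝ) (hA : Aᵀ = A) (h : IsMoorePenrose A B) : Bᵀ = B := by
  obtain ⟨h1, h2, h3, h4⟩ := h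
  have hab : A * Bᵀ = B * A := by
    conv_lhs => rw [← hA]
    rw [← transpose_mul, h4]
  have hba : Bᵀ * A = A * B := by
    conv_lhs => rw [← hA]
    rw [← transpose_mul, h3]
  have h' : IsMoorePenrose A Bᵀ := by
    refine ⟨?_, ?_, ?_, ?_⟩
    · calc A * Bᵀ * A = (A * B * A)ᵀ := by
            rw [transpose_mul, transpose_mul, hA, Matrix.mul_assoc]
        _ = A := by rw [h1, hA]
    · calc Bᵀ * A * Bᵀ = (B * A * B)ᵀ := by
            rw [transpose_mul, transpose_mul, hA, Matrix.mul_assoc]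
        _ = Bᵀ := by rw [h2]
    · rw [hab, h4]
    · rw [hba, h3]
  exact (mp_unique A Bᵀ B h' ⟨h1, h2, h3, h4⟩)

lemma dot_shift (A : Matrix m l ℝ) (u : m → ℝ) (w : l → ℝ) :
    A.mulVec w ⬝ᵥ u = w ⬝ᵥ Aᵀ.mulVec u := by
  rw [dotProduct_mulVec, vecMul_transpose]

lemma qd (A : Matrix m l ℝ) (M : Matrix m m ℝ) (u v : l → ℝ) :
    (A.mulVec u) ⬝ᵥ M.mulVec (A.mulVec v) = u ⬝ᵥ (Aᵀ * M * A).mulVec v := by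
  rw [dot_shift, mulVec_mulVec, mulVec_mulVec]

lemma dot_sym (M : Matrix m m ℝ) (hM : Mᵀ = M) (a b : m → ℝ) :
    a ⬝ᵥ M.mulVec b = b ⬝ᵥ M.mulVec a := by
  rw [dotProduct_comm, dot_shift, hM]

lemma psd_nonneg (M : Matrix m m ℝ) (hM : M.PosSemidef) (x : m → ℝ) :
    0 ≤ x ⬝ᵥ M.mulVec x := by simpa using hM.dotProduct_mulVec_nonneg x

lemma psd_symm (M : Matrix m m ℝ) (hM : M.PosSemidef) : Mᵀ = M := by
  have := hM.1
  rwa [Matrix.IsHermitian, conjTranspose_eq_transpose_of_trivial] at this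

lemma trace_mul_vecMulVec (M : Matrix m m ℝ) (a b : m → ℝ) :
    (M * vecMulVec a b).trace = b ⬝ᵥ M.mulVec a := by
  simp only [Matrix.trace, Matrix.diag, Matrix.mul_apply, vecMulVec_apply,
    dotProduct, mulVec, Finset.mul_sum]
  exact Finset.sum_congr rfl fun i _ => Finset.sum_congr rfl fun j _ => by ring

lemma vecMulVec_mulVec' (a b v : m → ℝ) :
    (vecMulVec a b).mulVec v = (b ⬝ᵥ v) • a := by
  ext i
  simp only [mulVec, vecMulVec_apply, dotProduct, Pi.smul_apply, smul_eq_mul,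
    Finset.sum_mul]
  exact Finset.sum_congr rfl fun j _ => by ring

end aux

/-- The minimum of `J(β; D, V)` over `Θ(D,V)` is attained at `β̂ = D Xᵀ N† y`
and equals `‖y yᵀ − N‖²_{N†} / ‖y‖₂² + 2`. -/
theorem stmt8 {n d : ℕ} (y : Fin n → ℝ) (hy0 : y ≠ 0)
    (X : Matrix (Fin n) (Fin d) ℝ)
    (D : Matrix (Fin d) (Fin d) ℝ) (V : Matrix (Fin n) (Fin n) ℝ)
    (hD : D.PosSemidef) (hV : V.PosSemidef)
    (Dd : Matrix (Fin d) (Fin d) ℝ) (hDd : IsMoorePenrose D Dd)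
    (Vd : Matrix (Fin n) (Fin n) ℝ) (hVd : IsMoorePenrose V Vd)
    (Nd : Matrix (Fin n) (Fin n) ℝ) (hNd : IsMoorePenrose (X * D * Xᵀ + V) Nd)
    (hy : y ∈ Set.range (X * D * Xᵀ + V).mulVec) :
    (D * Xᵀ * Nd).mulVec y ∈
      {β : Fin d → ℝ | y - X.mulVec β ∈ Set.range V.mulVec ∧ β ∈ Set.range D.mulVec} ∧
    (∀ β ∈ {β : Fin d → ℝ |
        y - X.mulVec β ∈ Set.range V.mulVec ∧ β ∈ Set.range D.mulVec},
      Jcost y X D V Dd Vd ((D * Xᵀ * Nd).mulVec y) ≤ Jcost y X D V Dd Vd β) ∧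
    Jcost y X D V Dd Vd ((D * Xᵀ * Nd).mulVec y) =
      ((vecMulVec y y - (X * D * Xᵀ + V))ᵀ * Nd *
          (vecMulVec y y - (X * D * Xᵀ + V))).trace / (y ⬝ᵥ y) + 2 := by
  obtain ⟨z, hz⟩ := hy
  have hyy0 : y ⬝ᵥ y ≠ 0 := fun h => hy0 (dotProduct_self_eq_zero.mp h)
  have hDt : Dᵀ = D := psd_symm D hD
  have hVt : Vᵀ = V := psd_symm V hV
  have hNt : (X * D * Xᵀ + V)ᵀ = X * D * Xᵀ + V := by
    rw [transpose_add, transpose_mul, transpose_mul, transpose_transpose, hDt, hVt,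
      ← Matrix.mul_assoc]
  have hNdt : Ndᵀ = Nd := mp_symm _ Nd hNt hNd
  have hDdt : Ddᵀ = Dd := mp_symm D Dd hDt hDd
  have hVdt : Vdᵀ = Vd := mp_symm V Vd hVt hVd
  have hNp : (X * D * Xᵀ + V).mulVec (Nd.mulVec y) = y := by
    conv_lhs => rw [← hz]
    rw [mulVec_mulVec, mulVec_mulVec, hNd.1, hz]
  have hNdN : Nd * (X * D * Xᵀ + V) = (X * D * Xᵀ + V) * Nd := by
    calc Nd * (X * D * Xᵀ + V) = (Nd * (X * D * Xᵀ + V))ᵀ := hNd.2.2.2.symm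
      _ = (X * D * Xᵀ + V)ᵀ * Ndᵀ := transpose_mul _ _
      _ = (X * D * Xᵀ + V) * Nd := by rw [hNt, hNdt]
  have hbhat : (D * Xᵀ * Nd).mulVec y = (D * Xᵀ).mulVec (Nd.mulVec y) := by
    rw [mulVec_mulVec]
  have hXb : X.mulVec ((D * Xᵀ * Nd).mulVec y) = (X * D * Xᵀ).mulVec (Nd.mulVec y) := by
    rw [hbhat, mulVec_mulVec, ← Matrix.mul_assoc]
  have hsplit : (X * D * Xᵀ).mulVec (Nd.mulVec y) + V.mulVec (Nd.mulVec y) = y := by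
    rw [← add_mulVec]; exact hNp
  have hres : y - X.mulVec ((D * Xᵀ * Nd).mulVec y) = V.mulVec (Nd.mulVec y) := by
    rw [hXb]; exact sub_eq_of_eq_add' hsplit.symm
  have hV3 : Vᵀ * Vd * V = V := by rw [hVt, hVd.1]
  have hD3 : Dᵀ * Dd * D = D := by rw [hDt, hDd.1]
  have hXD3 : (D * Xᵀ)ᵀ * Dd * (D * Xᵀ) = X * D * Xᵀ := by
    rw [transpose_mul, transpose_transpose, hDt, Matrix.mul_assoc X D Dd,
      ← Matrix.mul_assoc (X * (D * Dd)) D Xᵀ, Matrix.mul_assoc X (D * Dd) D, hDd.1]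
  have hqd : Nd.mulVec y ⬝ᵥ (X * D * Xᵀ).mulVec (Nd.mulVec y) +
      Nd.mulVec y ⬝ᵥ V.mulVec (Nd.mulVec y) = Nd.mulVec y ⬝ᵥ y := by
    rw [← dotProduct_add, hsplit]
  have hJhat : Jcost y X D V Dd Vd ((D * Xᵀ * Nd).mulVec y) =
      Nd.mulVec y ⬝ᵥ y + (X * D * Xᵀ + V).trace / (y ⬝ᵥ y) := by
    unfold Jcost
    rw [hres, hbhat, qd V Vd (Nd.mulVec y) (Nd.mulVec y),
      qd (D * Xᵀ) Dd (Nd.mulVec y) (Nd.mulVec y), hV3, hXD3]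
    linarith [hqd]
  refine ⟨⟨⟨Nd.mulVec y, hres.symm⟩, ⟨(Xᵀ * Nd).mulVec y, by
      rw [mulVec_mulVec, ← Matrix.mul_assoc]⟩⟩, ?_, ?_⟩
  · intro β hβ
    obtain ⟨⟨u, hu⟩, ⟨w, hw⟩⟩ := hβ
    have hJβ : Jcost y X D V Dd Vd β =
        u ⬝ᵥ V.mulVec u + w ⬝ᵥ D.mulVec w + (X * D * Xᵀ + V).trace / (y ⬝ᵥ y) := by
      unfold Jcost
      rw [← hu, ← hw, qd V Vd u u, qd D Dd w w, hV3, hD3]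
    rw [hJhat, hJβ]
    have k1 : 0 ≤ (Nd.mulVec y - u) ⬝ᵥ V.mulVec (Nd.mulVec y - u) := psd_nonneg V hV _
    have k2 : 0 ≤ (w - Xᵀ.mulVec (Nd.mulVec y)) ⬝ᵥ
        D.mulVec (w - Xᵀ.mulVec (Nd.mulVec y)) := psd_nonneg D hD _
    have ex1 : (Nd.mulVec y - u) ⬝ᵥ V.mulVec (Nd.mulVec y - u) =
        Nd.mulVec y ⬝ᵥ V.mulVec (Nd.mulVec y) - 2 * (u ⬝ᵥ V.mulVec (Nd.mulVec y)) +
          u ⬝ᵥ V.mulVec u := by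
      rw [mulVec_sub, dotProduct_sub, sub_dotProduct, sub_dotProduct,
        dot_sym V hVt (Nd.mulVec y) u]
      ring
    have ex2 : (w - Xᵀ.mulVec (Nd.mulVec y)) ⬝ᵥ D.mulVec (w - Xᵀ.mulVec (Nd.mulVec y)) =
        w ⬝ᵥ D.mulVec w - 2 * (Xᵀ.mulVec (Nd.mulVec y) ⬝ᵥ D.mulVec w) +
          Xᵀ.mulVec (Nd.mulVec y) ⬝ᵥ D.mulVec (Xᵀ.mulVec (Nd.mulVec y)) := by
      rw [mulVec_sub, dotProduct_sub, sub_dotProduct, sub_dotProduct,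
        dot_sym D hDt w (Xᵀ.mulVec (Nd.mulVec y))]
      ring
    have f1 : u ⬝ᵥ V.mulVec (Nd.mulVec y) =
        Nd.mulVec y ⬝ᵥ y - Nd.mulVec y ⬝ᵥ X.mulVec β := by
      rw [dot_sym V hVt u (Nd.mulVec y), hu, dotProduct_sub]
    have f2 : Xᵀ.mulVec (Nd.mulVec y) ⬝ᵥ D.mulVec w = Nd.mulVec y ⬝ᵥ X.mulVec β := by
      rw [hw, dot_shift, transpose_transpose]
    have f3 : Xᵀ.mulVec (Nd.mulVec y) ⬝ᵥ D.mulVec (Xᵀ.mulVec (Nd.mulVec y)) +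
        Nd.mulVec y ⬝ᵥ V.mulVec (Nd.mulVec y) = Nd.mulVec y ⬝ᵥ y := by
      rw [qd Xᵀ D (Nd.mulVec y) (Nd.mulVec y), transpose_transpose, ← dotProduct_add,
        hsplit]
    linarith [k1, k2, ex1, ex2, f1, f2, f3]
  · have hS : (vecMulVec y y)ᵀ = vecMulVec y y := by
      ext i j; simp [vecMulVec_apply, mul_comm]
    have hexp : (vecMulVec y y - (X * D * Xᵀ + V)) * Nd *
        (vecMulVec y y - (X * D * Xᵀ + V)) =
        vecMulVec y y * Nd * vecMulVec y y -
          vecMulVec y y * (Nd * (X * D * Xᵀ + V)) -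
          ((X * D * Xᵀ + V) * Nd * vecMulVec y y -
            (X * D * Xᵀ + V) * Nd * (X * D * Xᵀ + V)) := by
      noncomm_ring
    have t1 : (vecMulVec y y * Nd * vecMulVec y y).trace = (y ⬝ᵥ Nd.mulVec y) * (y ⬝ᵥ y) := by
      rw [trace_mul_vecMulVec, ← mulVec_mulVec, vecMulVec_mulVec', dotProduct_smul,
        smul_eq_mul]
    have t2 : (vecMulVec y y * (Nd * (X * D * Xᵀ + V))).trace = y ⬝ᵥ y := by
      rw [trace_mul_comm, trace_mul_vecMulVec, hNdN, ← mulVec_mulVec, hNp]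
    have t3 : ((X * D * Xᵀ + V) * Nd * vecMulVec y y).trace = y ⬝ᵥ y := by
      rw [trace_mul_vecMulVec, ← mulVec_mulVec, hNp]
    have t4 : ((X * D * Xᵀ + V) * Nd * (X * D * Xᵀ + V)).trace =
        (X * D * Xᵀ + V).trace := by rw [hNd.1]
    have htr : ((vecMulVec y y - (X * D * Xᵀ + V))ᵀ * Nd *
        (vecMulVec y y - (X * D * Xᵀ + V))).trace =
        (y ⬝ᵥ Nd.mulVec y) * (y ⬝ᵥ y) - 2 * (y ⬝ᵥ y) + (X * D * Xᵀ + V).trace := by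
      rw [transpose_sub, hS, hNt, hexp, trace_sub, trace_sub, trace_sub, t1, t2, t3, t4]
      ring
    rw [hJhat, htr, dotProduct_comm (Nd.mulVec y) y]
    field_simp
    ring
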